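/- Let C be an ωcpo, let X ⊆ C be ω-dense, and let n ∈ ℕ. Then the set Xⁿ of all n-tuples with all coordinates in X is ω-dense in the product ωcpo Cⁿ (functions from an n-element set to C, with componentwise order and componentwise suprema of ω-chains). -/

import Mathlib

open OmegaCompletePartialOrder

universe u

/-- A subset `S` of an ωcpo `P` is a sub-ωcpo if it is closed under suprema of ω-chains
contained in it. -/
def IsSubOmegaCpo {P : Type u} [OmegaCompletePartialOrder P] (S : Set P) : Prop :=
  ∀ c : Chain P, (∀ i ∈ c, i ∈ S) → ωSup c ∈ S

/-- A subset `X` of an ωcpo `P` is ω-dense if the only sub-ωcpo of `P` containing `X` is `P`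
itself. -/
def OmegaDense {P : Type u} [OmegaCompletePartialOrder P] (X : Set P) : Prop :=
  ∀ S : Set P, IsSubOmegaCpo S → X ⊆ S → S = Set.univ

/-- If `X` is an ω-dense subset of an ωcpo `C`, then for every `n : ℕ` the set `Xⁿ` of all
`n`-tuples with all coordinates in `X` is ω-dense in the power ωcpo `Cⁿ = (Fin n → C)`
(with componentwise order and componentwise suprema of ω-chains). -/
theorem omegaDense_pow {C : Type u} [OmegaCompletePartialOrder C] (X : Set C)
    (hX : OmegaDense X) (n : ℕ) :
    OmegaDense {f : Fin n → C | ∀ i, f i ∈ X} := by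
  intro S hS hXS
  -- key claim: for every k, every f whose coordinates of index ≥ k lie in X is in S
  have key : ∀ k : ℕ, ∀ f : Fin n → C, (∀ i : Fin n, k ≤ (i : ℕ) → f i ∈ X) → f ∈ S := by
    intro k
    induction k with
    | zero => intro f hf; exact hXS fun i => hf i (Nat.zero_le _)
    | succ k ih =>
      intro f hf
      by_cases hk : k < n
      · set k' : Fin n := ⟨k, hk⟩
        -- the monotone map x ↦ update f k' x
        have hmono : Monotone (Function.update f k') := by
          intro x y hxy j
          by_cases hj : j = k'
          · subst hj; simp [Function.update_self, hxy]
          · simp [Function.update_of_ne hj]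
        let u : C →o (Fin n → C) := ⟨Function.update f k', hmono⟩
        -- the set of x such that update f k' x ∈ S is a sub-ωcpo containing X
        have hT : IsSubOmegaCpo {x : C | Function.update f k' x ∈ S} := by
          intro c hc
          have : ωSup (c.map u) = Function.update f k' (ωSup c) := by
            funext j
            show ωSup (((c.map u)).map (Pi.evalOrderHom j)) = _
            by_cases hj : j = k'
            · subst hj
              have : ((c.map u)).map (Pi.evalOrderHom k') = c := by
                apply Chain.ext; funext i
                show Function.update f k' (c i) k' = c i
                simp [Function.update_self]
              rw [this, Function.update_self]
            · have : ((c.map u)).map (Pi.evalOrderHom j) = c.map ⟨fun _ => f j, fun _ _ _ => le_rfl⟩ := by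
                apply Chain.ext; funext i
                show Function.update f k' (c i) j = f j
                simp [Function.update_of_ne hj]
              rw [this, Function.update_of_ne hj]
              apply le_antisymm
              · exact ωSup_le _ _ fun i => le_rfl
              · exact le_ωSup_of_le 0 le_rfl
          show Function.update f k' (ωSup c) ∈ S
          rw [← this]
          apply hS
          rintro g ⟨i, rfl⟩
          exact hc (c i) ⟨i, rfl⟩
        have hXT : X ⊆ {x : C | Function.update f k' x ∈ S} := by
          intro x hx
          apply ih
          intro i hi
          by_cases hik : i = k'
          · subst hik; simpa [Function.update_self] using hx
          · rw [Function.update_of_ne hik]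
            apply hf
            rcases Nat.lt_or_ge k (i : ℕ) with h | h
            · exact h
            · exact absurd (Fin.ext (le_antisymm h hi)) hik
        have := hX _ hT hXT
        have hfk : f k' ∈ {x : C | Function.update f k' x ∈ S} := by
          rw [this]; trivial
        simpa [Function.update_eq_self] using hfk
      · apply ih
        intro i hi
        exact absurd (lt_of_le_of_lt hi i.isLt) (by omega)
  ext f
  simp only [Set.mem_univ, iff_true]
  exact key n f fun i hi => absurd (lt_of_le_of_lt hi i.isLt) (lt_irrefl _)
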